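/- arXiv:1110.5927 — 2 statements merged into one kernel-verified Lean document; each statement's English description precedes it below -/
import Mathlib

section
/- (Varshamov–Gilbert type bound) For every positive integer m with 2^m ≥ 8, there exists a family ε^(0), ..., ε^(M) of elements of {0,1}^{2^m} with ε^(0) = (0,...,0), such that log M ≥ (log 2 / 8) · 2^m and the Hamming distance between any two distinct members is at least 2^m / 8. -/
open Finset

/-- Volume of a Hamming ball of radius `r` in `{0,1}^n`. -/
private def VGvol (n r : ℕ) : ℕ := ∑ k ∈ range (r + 1), n.choose k

private lemma VGvol_mul_le (n r : ℕ) (hr : r ≤ n) : VGvol n r * 7 ^ (n - r) ≤ 8 ^ n := by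
  have h8 : (8 : ℕ) ^ n = ∑ k ∈ range (n + 1), n.choose k * 7 ^ (n - k) := by
    have := add_pow (1 : ℕ) 7 n
    simpa [mul_comm] using this
  calc VGvol n r * 7 ^ (n - r) = ∑ k ∈ range (r + 1), n.choose k * 7 ^ (n - r) := by
        rw [VGvol, Finset.sum_mul]
    _ ≤ ∑ k ∈ range (r + 1), n.choose k * 7 ^ (n - k) := by
        apply Finset.sum_le_sum
        intro k hk
        have hk' : k ≤ r := by have := Finset.mem_range.mp hk; omega
        exact Nat.mul_le_mul_left _
          (Nat.pow_le_pow_right (by norm_num) (Nat.sub_le_sub_left hk' n))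
    _ ≤ ∑ k ∈ range (n + 1), n.choose k * 7 ^ (n - k) := by
        apply Finset.sum_le_sum_of_subset
        exact Finset.range_subset_range.mpr (by omega)
    _ = 8 ^ n := h8.symm

private lemma VGball_card_le (n r : ℕ) (c : Fin n → Bool) :
    ((univ : Finset (Fin n → Bool)).filter fun y => hammingDist y c ≤ r).card ≤ VGvol n r := by
  classical
  have h1 : ((univ : Finset (Fin n → Bool)).filter fun y => hammingDist y c ≤ r).card ≤
      ((range (r + 1)).biUnion fun k => powersetCard k (univ : Finset (Fin n))).card := by
    apply Finset.card_le_card_of_injOn (fun y => univ.filter fun i => y i ≠ c i)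
    · intro y hy
      simp only [Finset.mem_coe, mem_filter, mem_univ, true_and] at hy
      simp only [Finset.mem_coe, mem_biUnion, mem_range, mem_powersetCard]
      exact ⟨hammingDist y c, Nat.lt_succ_of_le hy, Finset.filter_subset _ _, rfl⟩
    · intro y _ y' _ h
      funext i
      have := Finset.ext_iff.mp h i
      simp only [mem_filter, mem_univ, true_and] at this
      cases hy : y i <;> cases hy' : y' i <;> cases hc : c i <;> simp [hy, hy', hc] at this ⊢
  refine h1.trans ?_
  calc ((range (r + 1)).biUnion fun k => powersetCard k (univ : Finset (Fin n))).card
      ≤ ∑ k ∈ range (r + 1), (powersetCard k (univ : Finset (Fin n))).card :=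
        Finset.card_biUnion_le
    _ = VGvol n r := by
        rw [VGvol]
        apply Finset.sum_congr rfl
        intro k _
        simp [Finset.card_powersetCard]

theorem stmt_10 (m : ℕ) (hm : 8 ≤ 2 ^ m) :
    ∃ (M : ℕ) (ε : Fin (M + 1) → Fin (2 ^ m) → Bool),
      (ε 0 = fun _ => false) ∧
      Real.log M ≥ (Real.log 2 / 8) * 2 ^ m ∧
      ∀ i j : Fin (M + 1), i ≠ j →
        (2 ^ m : ℝ) / 8 ≤ ((Finset.univ.filter (fun k => ε i k ≠ ε j k)).card : ℝ) := by
  classical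
  set n := 2 ^ m with hn
  have hm3 : 3 ≤ m := by
    by_contra h
    interval_cases m <;> omega
  set d := 2 ^ (m - 3) with hd
  have hnd : n = 8 * d := by
    have h1 : (m - 3) + 3 = m := by omega
    calc n = 2 ^ ((m - 3) + 3) := by rw [hn, h1]
      _ = 2 ^ (m - 3) * 8 := by rw [pow_add]; norm_num
      _ = 8 * d := by rw [hd]; ring
  have hd1 : 1 ≤ d := Nat.one_le_two_pow
  -- valid codes
  set z : Fin n → Bool := fun _ => false with hz
  set P : Finset (Finset (Fin n → Bool)) :=
    (univ : Finset (Fin n → Bool)).powerset.filter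
      (fun C => z ∈ C ∧ ∀ x ∈ C, ∀ y ∈ C, x ≠ y → d ≤ hammingDist x y) with hP
  have hPne : P.Nonempty := by
    refine ⟨{z}, ?_⟩
    simp only [hP, mem_filter, mem_powerset]
    refine ⟨Finset.subset_univ _, by simp, ?_⟩
    intro x hx y hy hxy
    simp only [Finset.mem_singleton] at hx hy
    exact absurd (hx.trans hy.symm) hxy
  obtain ⟨C, hCP, hCmax⟩ := Finset.exists_max_image P Finset.card hPne
  simp only [hP, mem_filter, mem_powerset] at hCP
  obtain ⟨-, hzC, hsep⟩ := hCP
  -- covering property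
  have hcover : ∀ x : Fin n → Bool, ∃ c ∈ C, hammingDist x c ≤ d - 1 := by
    intro x
    by_contra h
    push_neg at h
    have hfar : ∀ c ∈ C, d ≤ hammingDist x c := by
      intro c hc
      have := h c hc
      omega
    have hxC : x ∉ C := by
      intro hx
      have := hfar x hx
      simp at this
      omega
    have hins : insert x C ∈ P := by
      simp only [hP, mem_filter, mem_powerset]
      refine ⟨Finset.subset_univ _, Finset.mem_insert_of_mem hzC, ?_⟩
      intro a ha b hb hab
      rcases Finset.mem_insert.mp ha with ha' | ha' <;>
        rcases Finset.mem_insert.mp hb with hb' | hb'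
      · exact absurd (ha'.trans hb'.symm) hab
      · rw [ha']; exact hfar b hb'
      · rw [hb', hammingDist_comm]; exact hfar a ha'
      · exact hsep a ha' b hb' hab
    have := hCmax _ hins
    rw [Finset.card_insert_of_notMem hxC] at this
    omega
  -- counting
  have hcount : 2 ^ n ≤ C.card * VGvol n (d - 1) := by
    have hsub : (univ : Finset (Fin n → Bool)) ⊆
        C.biUnion (fun c => univ.filter fun y => hammingDist y c ≤ d - 1) := by
      intro x _
      obtain ⟨c, hc, hxc⟩ := hcover x
      exact Finset.mem_biUnion.mpr ⟨c, hc, by simp [hxc]⟩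
    calc 2 ^ n = (univ : Finset (Fin n → Bool)).card := by
          simp [Finset.card_univ]
      _ ≤ (C.biUnion (fun c => univ.filter fun y => hammingDist y c ≤ d - 1)).card :=
          Finset.card_le_card hsub
      _ ≤ ∑ c ∈ C, (univ.filter fun y => hammingDist y c ≤ d - 1).card :=
          Finset.card_biUnion_le
      _ ≤ ∑ c ∈ C, VGvol n (d - 1) := Finset.sum_le_sum fun c _ => VGball_card_le n (d-1) c
      _ = C.card * VGvol n (d - 1) := by rw [Finset.sum_const, smul_eq_mul]
  -- size bound: C.card > 2^d
  have hsize : 2 ^ d < C.card := by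
    by_contra h
    push_neg at h
    have hV : VGvol n (d - 1) * 7 ^ (7 * d + 1) ≤ 8 ^ n := by
      have := VGvol_mul_le n (d - 1) (by omega)
      have e : n - (d - 1) = 7 * d + 1 := by omega
      rwa [e] at this
    have key : 2 ^ (8 * d) * 7 ^ (7 * d + 1) ≤ 2 ^ d * 8 ^ n := by
      calc 2 ^ (8 * d) * 7 ^ (7 * d + 1) = 2 ^ n * 7 ^ (7 * d + 1) := by rw [hnd]
        _ ≤ (C.card * VGvol n (d - 1)) * 7 ^ (7 * d + 1) :=
            Nat.mul_le_mul_right _ hcount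
        _ ≤ (2 ^ d * VGvol n (d - 1)) * 7 ^ (7 * d + 1) :=
            Nat.mul_le_mul_right _ (Nat.mul_le_mul_right _ h)
        _ = 2 ^ d * (VGvol n (d - 1) * 7 ^ (7 * d + 1)) := by ring
        _ ≤ 2 ^ d * 8 ^ n := Nat.mul_le_mul_left _ hV
    have key2 : 2 ^ (8 * d) * 7 ^ (7 * d + 1) ≤ 2 ^ (8 * d) * 2 ^ (17 * d) := by
      calc 2 ^ (8 * d) * 7 ^ (7 * d + 1) ≤ 2 ^ d * 8 ^ n := key
        _ = 2 ^ d * 2 ^ (24 * d) := by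
            rw [hnd, show (8:ℕ) = 2 ^ 3 by norm_num, ← pow_mul,
              show 3 * (2 ^ 3 * d) = 24 * d by ring]
        _ = 2 ^ (8 * d) * 2 ^ (17 * d) := by
            rw [← pow_add, ← pow_add]; congr 1; omega
    have key3 : 7 ^ (7 * d + 1) ≤ 2 ^ (17 * d) :=
      Nat.le_of_mul_le_mul_left key2 (Nat.pow_pos (by norm_num))
    have hlt : 2 ^ (17 * d) < 7 ^ (7 * d) := by
      calc 2 ^ (17 * d) = (2 ^ 17) ^ d := by rw [← pow_mul]
        _ < (7 ^ 7) ^ d := Nat.pow_lt_pow_left (by norm_num) (by omega)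
        _ = 7 ^ (7 * d) := by rw [← pow_mul]
    have : 7 ^ (7 * d) ≤ 7 ^ (7 * d + 1) := Nat.pow_le_pow_right (by norm_num) (by omega)
    omega
  -- build the family
  set M := (C.erase z).card with hM
  have hMcard : C.card = M + 1 := (Finset.card_erase_add_one hzC).symm
  have hM2 : 2 ^ d ≤ M := by omega
  set e := (C.erase z).equivFin with he
  set ε : Fin (M + 1) → Fin n → Bool := Fin.cons z (fun i => (e.symm i : Fin n → Bool)) with hε
  have hεmem : ∀ i, ε i ∈ C := by
    intro i
    refine Fin.cases ?_ ?_ i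
    · simpa [hε] using hzC
    · intro j
      simp only [hε, Fin.cons_succ]
      exact Finset.mem_of_mem_erase (e.symm j).2
  have hεne : ∀ i j : Fin (M + 1), i ≠ j → ε i ≠ ε j := by
    intro i j hij
    induction i using Fin.cases with
    | zero =>
      induction j using Fin.cases with
      | zero => exact absurd rfl hij
      | succ j' =>
        simp only [hε, Fin.cons_zero, Fin.cons_succ]
        exact fun h => Finset.ne_of_mem_erase (e.symm j').2 h.symm
    | succ i' =>
      induction j using Fin.cases with
      | zero =>
        simp only [hε, Fin.cons_zero, Fin.cons_succ]
        exact Finset.ne_of_mem_erase (e.symm i').2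
      | succ j' =>
        simp only [hε, Fin.cons_succ]
        intro h
        exact hij (congrArg Fin.succ (e.symm.injective (Subtype.ext h)))
  refine ⟨M, ε, ?_, ?_, ?_⟩
  · simp [hε, hz]
  · have h1 : (2 : ℝ) ^ d ≤ M := by exact_mod_cast hM2
    have h2 : Real.log ((2 : ℝ) ^ d) ≤ Real.log M :=
      Real.log_le_log (by positivity) h1
    rw [Real.log_pow] at h2
    have h3 : ((2 : ℕ) ^ m : ℝ) = 8 * d := by exact_mod_cast hnd
    rw [ge_iff_le]
    push_cast at h3 ⊢
    rw [h3]
    calc Real.log 2 / 8 * (8 * d) = d * Real.log 2 := by ring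
      _ ≤ Real.log M := h2
  · intro i j hij
    have hne : ε i ≠ ε j := hεne i j hij
    have hdist : d ≤ hammingDist (ε i) (ε j) := hsep _ (hεmem i) _ (hεmem j) hne
    have h3 : ((2 : ℕ) ^ m : ℝ) = 8 * d := by exact_mod_cast hnd
    have : (d : ℝ) ≤ ((univ.filter (fun k => ε i k ≠ ε j k)).card : ℝ) := by
      exact_mod_cast hdist
    push_cast at h3 ⊢
    rw [h3]
    linarith
end

section
/- Let h : [0,1] → ℝ be measurable and g : [0,1] → ℝ be nondecreasing, both square-integrable. Let h* be the increasing rearrangement of h (the quantile function of h(U), U uniform on [0,1]). Then ∫_0^1 (h*(y) - g(y))² dy ≤ ∫_0^1 (h(y) - g(y))² dy. -/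
open MeasureTheory Set Filter Topology

namespace Stmt15Aux

noncomputable def V (h : ℝ → ℝ) (t : ℝ) : ENNReal := volume {u ∈ Set.Icc (0:ℝ) 1 | h u ≤ t}

lemma V_mono (h : ℝ → ℝ) : Monotone (V h) := by
  intro a b hab
  exact measure_mono (fun u hu => ⟨hu.1, hu.2.trans hab⟩)

lemma sep_eq (h : ℝ → ℝ) (t : ℝ) :
    {u ∈ Set.Icc (0:ℝ) 1 | h u ≤ t} = (fun u => h u) ⁻¹' (Iic t) ∩ Icc (0:ℝ) 1 := by
  ext u; simp [and_comm]

lemma V_eq_restrict (h : ℝ → ℝ) (hmeas : Measurable h) (t : ℝ) :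
    V h t = (volume.restrict (Icc (0:ℝ) 1)) {u | h u ≤ t} := by
  unfold V
  rw [sep_eq]
  exact (Measure.restrict_apply (hmeas measurableSet_Iic)).symm

lemma V_le_one (h : ℝ → ℝ) (t : ℝ) : V h t ≤ 1 := by
  have : volume (Icc (0:ℝ) 1) = 1 := by simp [Real.volume_Icc]
  rw [← this]
  exact measure_mono (fun u hu => hu.1)

lemma V_ne_top (h : ℝ → ℝ) (t : ℝ) : V h t ≠ ⊤ :=
  fun hc => by simpa [hc] using V_le_one h t

lemma exists_V_ge (h : ℝ → ℝ) {y : ℝ} (hy : y < 1) :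
    ∃ t : ℝ, ENNReal.ofReal y ≤ V h t := by
  set s : ℕ → Set ℝ := fun n => {u ∈ Set.Icc (0:ℝ) 1 | h u ≤ n} with hs
  have hmono : Monotone s := fun a b hab u hu => ⟨hu.1, hu.2.trans (by exact_mod_cast hab)⟩
  have hU : (⋃ n, s n) = Icc (0:ℝ) 1 := by
    ext u
    simp only [mem_iUnion, hs, mem_sep_iff, mem_Icc]
    constructor
    · rintro ⟨n, hn, _⟩; exact hn
    · intro hu
      obtain ⟨n, hn⟩ := exists_nat_ge (h u)
      exact ⟨n, hu, hn⟩
  have htend : Tendsto (volume ∘ s) atTop (𝓝 (volume (⋃ n, s n))) :=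
    tendsto_measure_iUnion_atTop hmono
  rw [hU] at htend
  have h1 : volume (Icc (0:ℝ) 1) = 1 := by simp [Real.volume_Icc]
  rw [h1] at htend
  have hlt : ENNReal.ofReal y < 1 := ENNReal.ofReal_lt_one.mpr hy
  have := htend.eventually (Ioi_mem_nhds hlt)
  obtain ⟨n, hn⟩ := this.exists
  exact ⟨n, le_of_lt hn⟩

lemma exists_V_lt (h : ℝ → ℝ) (hmeas : Measurable h) {y : ℝ} (hy : 0 < y) :
    ∃ t : ℝ, V h t < ENNReal.ofReal y := by
  set s : ℕ → Set ℝ := fun n => {u ∈ Set.Icc (0:ℝ) 1 | h u ≤ -n} with hs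
  have hanti : Antitone s := fun a b hab u hu =>
    ⟨hu.1, hu.2.trans (by simp; exact_mod_cast hab)⟩
  have hI : (⋂ n, s n) = ∅ := by
    ext u
    simp only [mem_iInter, hs, mem_sep_iff, mem_empty_iff_false, iff_false, not_forall]
    obtain ⟨n, hn⟩ := exists_nat_gt (-h u)
    exact ⟨n, fun ⟨_, h2⟩ => by linarith⟩
  have hm : ∀ n, NullMeasurableSet (s n) volume := by
    intro n
    rw [hs]
    have : MeasurableSet {u ∈ Set.Icc (0:ℝ) 1 | h u ≤ (-n : ℝ)} := by
      rw [sep_eq]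
      exact (hmeas measurableSet_Iic).inter measurableSet_Icc
    exact this.nullMeasurableSet
  have htend : Tendsto (volume ∘ s) atTop (𝓝 (volume (⋂ n, s n))) :=
    tendsto_measure_iInter_atTop hm hanti
      ⟨0, ne_top_of_le_ne_top (measure_Icc_lt_top).ne (measure_mono fun u hu => hu.1)⟩
  rw [hI, measure_empty] at htend
  have hpos : 0 < ENNReal.ofReal y := ENNReal.ofReal_pos.mpr hy
  have := htend.eventually (Iio_mem_nhds hpos)
  obtain ⟨n, hn⟩ := this.exists
  exact ⟨-n, hn⟩

lemma V_right_cont (h : ℝ → ℝ) (hmeas : Measurable h) {c : ENNReal} {a : ℝ}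
    (hall : ∀ n : ℕ, c ≤ V h (a + 1 / (n + 1))) : c ≤ V h a := by
  set s : ℕ → Set ℝ := fun n => {u ∈ Set.Icc (0:ℝ) 1 | h u ≤ a + 1 / (n + 1)} with hs
  have hanti : Antitone s := by
    intro m n hmn u hu
    refine ⟨hu.1, hu.2.trans ?_⟩
    have hcast : (m:ℝ) ≤ n := Nat.cast_le.mpr hmn
    have : (1:ℝ) / (n + 1) ≤ 1 / (m + 1) :=
      one_div_le_one_div_of_le (by positivity) (by linarith)
    linarith
  have hI : (⋂ n, s n) = {u ∈ Set.Icc (0:ℝ) 1 | h u ≤ a} := by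
    ext u
    simp only [mem_iInter, hs, mem_sep_iff]
    constructor
    · intro hu
      refine ⟨(hu 0).1, ?_⟩
      by_contra hc
      push_neg at hc
      obtain ⟨n, hn⟩ := exists_nat_one_div_lt (sub_pos.mpr hc)
      have := (hu n).2
      push_cast at hn this
      linarith
    · intro hu n
      have : (0:ℝ) < 1 / (n+1) := by positivity
      exact ⟨hu.1, by linarith [hu.2]⟩
  have hm : ∀ n, NullMeasurableSet (s n) volume := by
    intro n
    have : MeasurableSet {u ∈ Set.Icc (0:ℝ) 1 | h u ≤ a + 1 / (n + 1)} := by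
      rw [sep_eq]
      exact (hmeas measurableSet_Iic).inter measurableSet_Icc
    exact this.nullMeasurableSet
  have htend : Tendsto (volume ∘ s) atTop (𝓝 (volume (⋂ n, s n))) :=
    tendsto_measure_iInter_atTop hm hanti
      ⟨0, ne_top_of_le_ne_top (measure_Icc_lt_top).ne (measure_mono fun u hu => hu.1)⟩
  rw [hI] at htend
  exact ge_of_tendsto htend (Eventually.of_forall hall)

end Stmt15Aux

namespace Stmt15Aux

lemma key (h : ℝ → ℝ) (hmeas : Measurable h) {y : ℝ} (hy : y ∈ Ioo (0:ℝ) 1) (t : ℝ) :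
    sInf {z : ℝ | ENNReal.ofReal y ≤ volume {u ∈ Set.Icc (0:ℝ) 1 | h u ≤ z}} ≤ t
      ↔ ENNReal.ofReal y ≤ V h t := by
  show sInf {z : ℝ | ENNReal.ofReal y ≤ V h z} ≤ t ↔ ENNReal.ofReal y ≤ V h t
  set S := {z : ℝ | ENNReal.ofReal y ≤ V h z} with hS
  have hne : S.Nonempty := exists_V_ge h hy.2
  obtain ⟨t0, ht0⟩ := exists_V_lt h hmeas hy.1
  have hbdd : BddBelow S := ⟨t0, fun z hz => by
    by_contra hc; push_neg at hc
    exact absurd (le_trans hz (V_mono h hc.le)) (not_le.mpr ht0)⟩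
  have hmem : ENNReal.ofReal y ≤ V h (sInf S) := by
    apply V_right_cont h hmeas
    intro n
    have hlt : sInf S < sInf S + 1/(n+1) := lt_add_of_pos_right _ (by positivity)
    obtain ⟨z, hzS, hz⟩ := exists_lt_of_csInf_lt hne hlt
    exact le_trans hzS (V_mono h hz.le)
  constructor
  · intro hle; exact le_trans hmem (V_mono h hle)
  · intro ht; exact csInf_le hbdd ht

variable {h g hstar : ℝ → ℝ}

lemma key' (hmeas : Measurable h)
    (hdef : ∀ y, hstar y =
      sInf {z : ℝ | ENNReal.ofReal y ≤ volume {u ∈ Set.Icc (0 : ℝ) 1 | h u ≤ z}})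
    {y : ℝ} (hy : y ∈ Ioo (0:ℝ) 1) (t : ℝ) :
    hstar y ≤ t ↔ ENNReal.ofReal y ≤ V h t := by
  rw [hdef y]; exact key h hmeas hy t

lemma hstar_monoOn (hmeas : Measurable h)
    (hdef : ∀ y, hstar y =
      sInf {z : ℝ | ENNReal.ofReal y ≤ volume {u ∈ Set.Icc (0 : ℝ) 1 | h u ≤ z}}) :
    MonotoneOn hstar (Ioo (0:ℝ) 1) := by
  intro a ha b hb hab
  have hb' : ENNReal.ofReal b ≤ V h (hstar b) := (key' hmeas hdef hb (hstar b)).mp le_rfl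
  exact (key' hmeas hdef ha (hstar b)).mpr
    (le_trans (ENNReal.ofReal_le_ofReal hab) hb')

lemma hstar_aemeas (hmeas : Measurable h)
    (hdef : ∀ y, hstar y =
      sInf {z : ℝ | ENNReal.ofReal y ≤ volume {u ∈ Set.Icc (0 : ℝ) 1 | h u ≤ z}}) :
    AEMeasurable hstar (volume.restrict (Ioo (0:ℝ) 1)) :=
  aemeasurable_restrict_of_monotoneOn measurableSet_Ioo (hstar_monoOn hmeas hdef)

lemma map_eq (hmeas : Measurable h)
    (hdef : ∀ y, hstar y =
      sInf {z : ℝ | ENNReal.ofReal y ≤ volume {u ∈ Set.Icc (0 : ℝ) 1 | h u ≤ z}}) :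
    (volume.restrict (Ioo (0:ℝ) 1)).map hstar
      = (volume.restrict (Icc (0:ℝ) 1)).map h := by
  have haem := hstar_aemeas hmeas hdef
  have hfin : IsFiniteMeasure ((volume.restrict (Ioo (0:ℝ) 1)).map hstar) := by
    constructor
    rw [Measure.map_apply_of_aemeasurable haem MeasurableSet.univ]
    simp [Real.volume_Ioo]
  refine Measure.ext_of_Iic _ _ (fun t => ?_)
  have hL : (volume.restrict (Ioo (0:ℝ) 1)).map hstar (Iic t) = V h t := by
    rw [Measure.map_apply_of_aemeasurable haem measurableSet_Iic,
      Measure.restrict_apply' measurableSet_Ioo]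
    set c := (V h t).toReal with hc
    have hc1 : c ≤ 1 := by
      rw [hc, ← ENNReal.toReal_one]
      exact ENNReal.toReal_mono ENNReal.one_ne_top (V_le_one h t)
    have hseteq : hstar ⁻¹' Iic t ∩ Ioo 0 1 = Iic c ∩ Ioo 0 1 := by
      ext y
      simp only [mem_inter_iff, mem_preimage, mem_Iic, and_congr_left_iff]
      intro hy
      rw [key' hmeas hdef hy t, hc,
        ← ENNReal.ofReal_le_iff_le_toReal (V_ne_top h t)]
    rw [hseteq]
    rcases lt_or_eq_of_le hc1 with hlt | heq
    · have : Iic c ∩ Ioo 0 1 = Ioc 0 c := by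
        ext y
        simp only [mem_inter_iff, mem_Iic, mem_Ioo, mem_Ioc]
        constructor
        · rintro ⟨h1, h2, _⟩; exact ⟨h2, h1⟩
        · rintro ⟨h1, h2⟩; exact ⟨h2, h1, lt_of_le_of_lt h2 hlt⟩
      rw [this, Real.volume_Ioc, sub_zero, hc, ENNReal.ofReal_toReal (V_ne_top h t)]
    · have hV1 : V h t = 1 := by
        have := ENNReal.ofReal_toReal (V_ne_top h t)
        rw [← hc, heq] at this
        simpa using this.symm
      have : Iic c ∩ Ioo 0 1 = Ioo 0 1 := by
        apply inter_eq_self_of_subset_right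
        intro y hy
        rw [mem_Iic, heq]
        exact hy.2.le
      rw [this, Real.volume_Ioo, hV1]
      norm_num
  have hR : (volume.restrict (Icc (0:ℝ) 1)).map h (Iic t) = V h t := by
    rw [Measure.map_apply hmeas measurableSet_Iic]
    exact (V_eq_restrict h hmeas t).symm
  rw [hL, hR]

end Stmt15Aux

namespace Stmt15Aux

lemma rIoo : volume.restrict (Ioo (0:ℝ) 1) = volume.restrict (Icc (0:ℝ) 1) :=
  Measure.restrict_congr_set Ioo_ae_eq_Icc

variable {h g hstar : ℝ → ℝ}

lemma hstar_aemeas' (hmeas : Measurable h)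
    (hdef : ∀ y, hstar y =
      sInf {z : ℝ | ENNReal.ofReal y ≤ volume {u ∈ Set.Icc (0 : ℝ) 1 | h u ≤ z}}) :
    AEMeasurable hstar (volume.restrict (Icc (0:ℝ) 1)) := by
  rw [← rIoo]; exact hstar_aemeas hmeas hdef

lemma map_eq' (hmeas : Measurable h)
    (hdef : ∀ y, hstar y =
      sInf {z : ℝ | ENNReal.ofReal y ≤ volume {u ∈ Set.Icc (0 : ℝ) 1 | h u ≤ z}}) :
    (volume.restrict (Icc (0:ℝ) 1)).map hstar
      = (volume.restrict (Icc (0:ℝ) 1)).map h := by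
  conv_lhs => rw [← rIoo]
  exact map_eq hmeas hdef

lemma transfer (hmeas : Measurable h)
    (hdef : ∀ y, hstar y =
      sInf {z : ℝ | ENNReal.ofReal y ≤ volume {u ∈ Set.Icc (0 : ℝ) 1 | h u ≤ z}})
    {f : ℝ → ℝ} (hf : Measurable f) :
    ∫ y in Icc (0:ℝ) 1, f (hstar y) = ∫ u in Icc (0:ℝ) 1, f (h u) := by
  have h1 := integral_map (hstar_aemeas' hmeas hdef) hf.aestronglyMeasurable
  have h2 := integral_map (μ := volume.restrict (Icc (0:ℝ) 1))
    hmeas.aemeasurable hf.aestronglyMeasurable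
  rw [← h1, map_eq' hmeas hdef, h2]

lemma transfer_int (hmeas : Measurable h)
    (hdef : ∀ y, hstar y =
      sInf {z : ℝ | ENNReal.ofReal y ≤ volume {u ∈ Set.Icc (0 : ℝ) 1 | h u ≤ z}})
    {f : ℝ → ℝ} (hf : Measurable f)
    (hi : Integrable (fun u => f (h u)) (volume.restrict (Icc (0:ℝ) 1))) :
    Integrable (fun y => f (hstar y)) (volume.restrict (Icc (0:ℝ) 1)) := by
  have h1 := integrable_map_measure (μ := volume.restrict (Icc (0:ℝ) 1))
    (f := hstar) hf.aestronglyMeasurable (hstar_aemeas' hmeas hdef)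
  have h2 := integrable_map_measure (μ := volume.restrict (Icc (0:ℝ) 1))
    (f := h) hf.aestronglyMeasurable hmeas.aemeasurable
  rw [map_eq' hmeas hdef, h2] at h1
  have := h1.mp (by simpa [Function.comp_def] using hi)
  simpa [Function.comp_def] using this

lemma memL2_hstar (hmeas : Measurable h)
    (hdef : ∀ y, hstar y =
      sInf {z : ℝ | ENNReal.ofReal y ≤ volume {u ∈ Set.Icc (0 : ℝ) 1 | h u ≤ z}})
    (hL2h : MemLp h 2 (volume.restrict (Set.Icc (0 : ℝ) 1))) :
    MemLp hstar 2 (volume.restrict (Set.Icc (0 : ℝ) 1)) := by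
  have h1 := memLp_map_measure_iff (μ := volume.restrict (Icc (0:ℝ) 1)) (p := (2:ENNReal))
    (g := id) (f := hstar) aestronglyMeasurable_id (hstar_aemeas' hmeas hdef)
  have h2 := memLp_map_measure_iff (μ := volume.restrict (Icc (0:ℝ) 1)) (p := (2:ENNReal))
    (g := id) (f := h) aestronglyMeasurable_id hmeas.aemeasurable
  rw [map_eq' hmeas hdef, h2] at h1
  have := h1.mp (by simpa [Function.comp_def] using hL2h)
  simpa [Function.comp_def] using this

end Stmt15Aux

namespace Stmt15Aux

variable {h g hstar : ℝ → ℝ}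

lemma intOn {f : ℝ → ℝ} (hf : Integrable f (volume.restrict (Icc (0:ℝ) 1)))
    {s : Set ℝ} (hsub : s ⊆ Icc (0:ℝ) 1) (hm : MeasurableSet s) :
    IntegrableOn f s volume := by
  have := hf.restrict (s := s)
  rwa [Measure.restrict_restrict hm, inter_eq_self_of_subset_left hsub] at this

lemma bathtub (hmeas : Measurable h)
    (hdef : ∀ y, hstar y =
      sInf {z : ℝ | ENNReal.ofReal y ≤ volume {u ∈ Set.Icc (0 : ℝ) 1 | h u ≤ z}})
    {s : ℝ} (hs : s ∈ Ioo (0:ℝ) 1)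
    (hInt_h : Integrable h (volume.restrict (Icc (0:ℝ) 1)))
    (hInt_hstar : Integrable hstar (volume.restrict (Icc (0:ℝ) 1))) :
    ∫ y in Ioo s 1, h y ≤ ∫ y in Ioo s 1, hstar y := by
  set t := hstar s with ht
  set f : ℝ → ℝ := fun y => max (h y - t) 0 with hf
  set fstar : ℝ → ℝ := fun y => max (hstar y - t) 0 with hfstar
  have hmono := hstar_monoOn hmeas hdef
  have hsub1 : Ioo s (1:ℝ) ⊆ Icc 0 1 := fun y hy => ⟨(hs.1.trans hy.1).le, hy.2.le⟩
  have hsub2 : Ioo (0:ℝ) 1 ⊆ Icc 0 1 := Ioo_subset_Icc_self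
  have hsub3 : Ioc (0:ℝ) s ⊆ Icc 0 1 := fun y hy => ⟨hy.1.le, hy.2.trans hs.2.le⟩
  have hIh1 : IntegrableOn h (Ioo s 1) volume := intOn hInt_h hsub1 measurableSet_Ioo
  have hIf : Integrable f (volume.restrict (Icc (0:ℝ) 1)) :=
    (hInt_h.sub (integrable_const t)).pos_part
  have hIfstar : Integrable fstar (volume.restrict (Icc (0:ℝ) 1)) :=
    (hInt_hstar.sub (integrable_const t)).pos_part
  have hIhstar1 : IntegrableOn hstar (Ioo s 1) volume :=
    intOn hInt_hstar hsub1 measurableSet_Ioo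
  have hvol : (volume (Ioo s (1:ℝ))).toReal = 1 - s := by
    rw [Real.volume_Ioo, ENNReal.toReal_ofReal (by linarith [hs.2])]
  -- pointwise facts
  have h2 : ∀ y ∈ Ioo s (1:ℝ), fstar y = hstar y - t := by
    intro y hy
    have : t ≤ hstar y := hmono hs (⟨hs.1.trans hy.1, hy.2⟩) hy.1.le
    simp [hfstar, max_eq_left, sub_nonneg.mpr this]
  have h3 : ∀ y ∈ Ioc (0:ℝ) s, fstar y = 0 := by
    intro y hy
    have : hstar y ≤ t := hmono ⟨hy.1, hy.2.trans_lt hs.2⟩ hs hy.2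
    simp [hfstar, max_eq_right, sub_nonpos.mpr this]
  -- step A/B : ∫_{(s,1)} h ≤ ∫_{(s,1)} f + t (1-s)
  have hAB : ∫ y in Ioo s 1, h y ≤ (∫ y in Ioo s 1, f y) + t * (1 - s) := by
    have e1 : ∫ y in Ioo s 1, (h y - t) = (∫ y in Ioo s 1, h y) - t * (1 - s) := by
      rw [integral_sub hIh1 (integrable_const t), setIntegral_const, smul_eq_mul, measureReal_def, hvol,
        mul_comm]
    have e2 : ∫ y in Ioo s 1, (h y - t) ≤ ∫ y in Ioo s 1, f y := by
      apply setIntegral_mono_on (hIh1.sub (integrable_const t))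
        (intOn hIf hsub1 measurableSet_Ioo) measurableSet_Ioo
      intro y _
      exact le_max_left _ _
    linarith
  -- step C : ∫_{(s,1)} f ≤ ∫_{(0,1)} f
  have hC : ∫ y in Ioo s 1, f y ≤ ∫ y in Ioo 0 1, f y := by
    apply setIntegral_mono_set (intOn hIf hsub2 measurableSet_Ioo)
      (Eventually.of_forall (fun y => le_max_right _ _))
      (HasSubset.Subset.eventuallyLE (Ioo_subset_Ioo_left hs.1.le))
  -- step D : ∫_{(0,1)} f = ∫_{(0,1)} fstar
  have hD : ∫ y in Ioo 0 1, f y = ∫ y in Ioo 0 1, fstar y := by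
    have hfm : Measurable fun x : ℝ => max (x - t) 0 :=
      (measurable_id.sub_const t).max measurable_const
    have := transfer hmeas hdef hfm
    show (∫ y, f y ∂(volume.restrict (Ioo (0:ℝ) 1)))
      = ∫ y, fstar y ∂(volume.restrict (Ioo (0:ℝ) 1))
    rw [rIoo]
    exact this.symm
  -- step E : ∫_{(0,1)} fstar = ∫_{(s,1)} fstar
  have hE : ∫ y in Ioo 0 1, fstar y = ∫ y in Ioo s 1, fstar y := by
    have hunion : Ioc (0:ℝ) s ∪ Ioo s 1 = Ioo 0 1 := Ioc_union_Ioo_eq_Ioo hs.1.le hs.2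
    have hdisj : Disjoint (Ioc (0:ℝ) s) (Ioo s 1) := by
      apply Set.disjoint_left.mpr
      rintro y ⟨_, hy2⟩ ⟨hy3, _⟩
      exact absurd hy2 (not_le.mpr hy3)
    rw [← hunion, setIntegral_union hdisj measurableSet_Ioo
      (intOn hIfstar hsub3 measurableSet_Ioc) (intOn hIfstar hsub1 measurableSet_Ioo)]
    rw [setIntegral_congr_fun measurableSet_Ioc h3]
    simp
  -- step F : ∫_{(s,1)} fstar = ∫_{(s,1)} hstar - t(1-s)
  have hF : ∫ y in Ioo s 1, fstar y = (∫ y in Ioo s 1, hstar y) - t * (1 - s) := by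
    rw [setIntegral_congr_fun measurableSet_Ioo h2,
      integral_sub hIhstar1 (integrable_const t), setIntegral_const, smul_eq_mul, measureReal_def, hvol,
      mul_comm]
  linarith

end Stmt15Aux


namespace Stmt15Aux2

variable {g : ℝ → ℝ}

noncomputable def Gc (g : ℝ → ℝ) : ℝ → ℝ := fun y => g (max 0 (min 1 y))

lemma Gc_mono (hg : MonotoneOn g (Set.Icc (0 : ℝ) 1)) : Monotone (Gc g) := by
  intro a b hab
  have ha : max 0 (min 1 a) ∈ Icc (0:ℝ) 1 :=
    ⟨le_max_left _ _, max_le zero_le_one (min_le_left _ _)⟩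
  have hb : max 0 (min 1 b) ∈ Icc (0:ℝ) 1 :=
    ⟨le_max_left _ _, max_le zero_le_one (min_le_left _ _)⟩
  exact hg ha hb (max_le_max le_rfl (min_le_min le_rfl hab))

lemma Gc_eqOn : EqOn (Gc g) g (Icc (0:ℝ) 1) := by
  intro y hy
  unfold Gc
  rw [min_eq_right hy.2, max_eq_right hy.1]

lemma HL_core (hg : MonotoneOn g (Set.Icc (0 : ℝ) 1)) {φ ψ : ℝ → ℝ}
    (hφm : AEMeasurable φ (volume.restrict (Icc (0:ℝ) 1)))
    (hψm : AEMeasurable ψ (volume.restrict (Icc (0:ℝ) 1)))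
    (hφi : Integrable φ (volume.restrict (Icc (0:ℝ) 1)))
    (hψi : Integrable ψ (volume.restrict (Icc (0:ℝ) 1)))
    (hgφ : Integrable (fun y => g y * φ y) (volume.restrict (Icc (0:ℝ) 1)))
    (hgψ : Integrable (fun y => g y * ψ y) (volume.restrict (Icc (0:ℝ) 1)))
    (heq : ∫ y in Icc (0:ℝ) 1, φ y = ∫ y in Icc (0:ℝ) 1, ψ y)
    (hbath : ∀ s ∈ Ioo (0:ℝ) 1, ∫ y in Ioo s 1, φ y ≤ ∫ y in Ioo s 1, ψ y) :
    ∫ y in Icc (0:ℝ) 1, g y * φ y ≤ ∫ y in Icc (0:ℝ) 1, g y * ψ y := by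
  set μ : Measure ℝ := volume.restrict (Icc (0:ℝ) 1) with hμ
  have hG : Monotone (Gc g) := Gc_mono hg
  set SF := hG.stieltjesFunction with hSF
  set c : ℝ := SF 0 with hc
  set ν : Measure ℝ := SF.measure.restrict (Ioc (0:ℝ) 1) with hν
  haveI : IsFiniteMeasure ν := by
    constructor
    rw [hν, Measure.restrict_apply_univ, StieltjesFunction.measure_Ioc]
    exact ENNReal.ofReal_lt_top
  -- a.e. representation of g
  have hae : ∀ᵐ y ∂μ, g y = c + (SF.measure (Ioc 0 y)).toReal := by
    have hcont : ∀ᵐ y ∂(volume : Measure ℝ), ContinuousAt (Gc g) y := by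
      rw [ae_iff]
      exact (hG.countable_not_continuousAt).measure_zero _
    rw [hμ]
    filter_upwards [ae_restrict_mem measurableSet_Icc, ae_restrict_of_ae hcont] with y hy hcy
    have h1 : SF y = Gc g y := by
      rw [hSF, hG.stieltjesFunction_eq]
      exact hG.continuousWithinAt_Ioi_iff_rightLim_eq.mp hcy.continuousWithinAt
    have h3 : SF y = g y := h1.trans (Gc_eqOn hy)
    rw [SF.measure_Ioc, ENNReal.toReal_ofReal (sub_nonneg.mpr (SF.mono hy.1)), h3, hc]
    ring
  -- main decomposition
  have decomp : ∀ χ : ℝ → ℝ, AEMeasurable χ μ → Integrable χ μ →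
      Integrable (fun y => g y * χ y) μ →
      (∫ y in Icc (0:ℝ) 1, g y * χ y)
        = c * (∫ y in Icc (0:ℝ) 1, χ y) + ∫ s, (∫ y in Ioo s 1, χ y) ∂ν
        ∧ Integrable (fun s => ∫ y in Ioo s 1, χ y) ν := by
    intro χ hχm hχi hgχ
    have hTχi : Integrable (fun y => (SF.measure (Ioc 0 y)).toReal * χ y) μ := by
      apply (hgχ.sub (hχi.const_mul c)).congr
      filter_upwards [hae] with y hy
      simp only [Pi.sub_apply]
      rw [hy]; ring
    have hstep1 : ∫ y in Icc (0:ℝ) 1, g y * χ y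
        = c * (∫ y in Icc (0:ℝ) 1, χ y)
          + ∫ y, (SF.measure (Ioc 0 y)).toReal * χ y ∂μ := by
      rw [← integral_const_mul, ← integral_add (hχi.const_mul c) hTχi]
      apply integral_congr_ae
      filter_upwards [hae] with y hy
      rw [hy]; ring
    set F : ℝ → ℝ → ℝ := fun y s => (Ioc (0:ℝ) y).indicator (fun _ => (1:ℝ)) s * χ y with hF
    have hsetm : MeasurableSet {p : ℝ × ℝ | p.2 ∈ Ioc 0 p.1} := by
      have he : {p : ℝ × ℝ | p.2 ∈ Ioc 0 p.1}
          = {p : ℝ × ℝ | (0:ℝ) < p.2} ∩ {p : ℝ × ℝ | p.2 ≤ p.1} := rfl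
      rw [he]
      exact (measurableSet_lt measurable_const measurable_snd).inter
        (measurableSet_le measurable_snd measurable_fst)
    have hindm : Measurable ({p : ℝ × ℝ | p.2 ∈ Ioc 0 p.1}.indicator (fun _ => (1:ℝ))) :=
      measurable_const.indicator hsetm
    have huncurry : Function.uncurry F
        = fun p : ℝ × ℝ => {q : ℝ × ℝ | q.2 ∈ Ioc 0 q.1}.indicator (fun _ => (1:ℝ)) p * χ p.1 := by
      ext p
      show (Ioc (0:ℝ) p.1).indicator (fun _ => (1:ℝ)) p.2 * χ p.1
          = {q : ℝ × ℝ | q.2 ∈ Ioc 0 q.1}.indicator (fun _ => (1:ℝ)) p * χ p.1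
      simp only [Set.indicator_apply, mem_setOf_eq]
    have hFasm : AEStronglyMeasurable (Function.uncurry F) (μ.prod ν) := by
      rw [huncurry]
      exact (hindm.aemeasurable.mul (hχm.comp_fst)).aestronglyMeasurable
    have hFint : Integrable (Function.uncurry F) (μ.prod ν) := by
      rw [integrable_prod_iff hFasm]
      constructor
      · apply Eventually.of_forall
        intro y
        show Integrable (fun s => (Ioc (0:ℝ) y).indicator (fun _ => (1:ℝ)) s * χ y) ν
        exact ((integrable_const (1:ℝ)).indicator measurableSet_Ioc).mul_const (χ y)
      · apply Integrable.mono' (hχi.norm.mul_const ((ν univ).toReal))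
          (hFasm.norm.integral_prod_right')
        apply Eventually.of_forall
        intro y
        have hnn : 0 ≤ ∫ s, ‖Function.uncurry F (y, s)‖ ∂ν :=
          integral_nonneg fun s => norm_nonneg _
        rw [Real.norm_of_nonneg hnn]
        have hptw : ∀ s, ‖Function.uncurry F (y, s)‖ ≤ ‖χ y‖ := by
          intro s
          show ‖(Ioc (0:ℝ) y).indicator (fun _ => (1:ℝ)) s * χ y‖ ≤ ‖χ y‖
          rw [norm_mul]
          by_cases hs : s ∈ Ioc (0:ℝ) y
          · simp [indicator_of_mem hs]
          · simp [indicator_of_notMem hs, norm_nonneg]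
        calc ∫ s, ‖Function.uncurry F (y, s)‖ ∂ν ≤ ∫ _s, ‖χ y‖ ∂ν := by
              apply integral_mono _ (integrable_const _) hptw
              exact (((integrable_const (1:ℝ)).indicator measurableSet_Ioc).mul_const (χ y)).norm
          _ = ‖χ y‖ * (ν univ).toReal := by rw [integral_const, smul_eq_mul, mul_comm, measureReal_def]
    have hswap := integral_integral_swap hFint
    have hTs : ∫ y, (SF.measure (Ioc 0 y)).toReal * χ y ∂μ = ∫ y, ∫ s, F y s ∂ν ∂μ := by
      rw [hμ]
      apply integral_congr_ae
      filter_upwards [ae_restrict_mem measurableSet_Icc] with y hy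
      have h1 : (SF.measure (Ioc 0 y)).toReal
          = ∫ s, (Ioc (0:ℝ) y).indicator (fun _ => (1:ℝ)) s ∂ν := by
        rw [integral_indicator_const (1:ℝ) measurableSet_Ioc, hν, measureReal_def,
          Measure.restrict_apply measurableSet_Ioc,
          inter_eq_self_of_subset_left (Ioc_subset_Ioc_right hy.2)]
        simp
      rw [h1, ← integral_mul_const]
    have hinner : ∀ᵐ s ∂ν, (∫ y, F y s ∂μ) = ∫ y in Ioo s 1, χ y := by
      rw [hν]
      filter_upwards [ae_restrict_mem measurableSet_Ioc] with s hs
      have hFs : (fun y => F y s) = (Ici s).indicator χ := by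
        ext y
        by_cases hy : s ≤ y
        · have hmem : s ∈ Ioc (0:ℝ) y := ⟨hs.1, hy⟩
          simp [hF, indicator_of_mem, hmem, hy]
        · have hmem : s ∉ Ioc (0:ℝ) y := fun hc => hy hc.2
          simp [hF, indicator_of_notMem, hmem, hy]
      rw [hFs, integral_indicator measurableSet_Ici, hμ,
        Measure.restrict_restrict measurableSet_Ici]
      have hseteq : Ici s ∩ Icc (0:ℝ) 1 = Icc s 1 := by
        ext y
        simp only [mem_inter_iff, mem_Ici, mem_Icc]
        exact ⟨fun ⟨h1, _, h3⟩ => ⟨h1, h3⟩, fun ⟨h1, h2⟩ => ⟨h1, hs.1.le.trans h1, h2⟩⟩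
      rw [hseteq, Measure.restrict_congr_set Ioo_ae_eq_Icc.symm]
    have hmargF : Integrable (fun s => ∫ y, F y s ∂μ) ν := hFint.integral_prod_right
    have hmarg : Integrable (fun s => ∫ y in Ioo s 1, χ y) ν := hmargF.congr hinner
    refine ⟨?_, hmarg⟩
    rw [hstep1, hTs, hswap]
    congr 1
    exact integral_congr_ae hinner
  obtain ⟨eφ, iφ⟩ := decomp φ hφm hφi hgφ
  obtain ⟨eψ, iψ⟩ := decomp ψ hψm hψi hgψ
  rw [eφ, eψ, heq]
  have hmono : ∫ s, (∫ y in Ioo s 1, φ y) ∂ν ≤ ∫ s, (∫ y in Ioo s 1, ψ y) ∂ν := by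
    apply integral_mono_ae iφ iψ
    rw [hν]
    filter_upwards [ae_restrict_mem measurableSet_Ioc] with s hs
    rcases lt_or_eq_of_le hs.2 with hlt | heq1
    · exact hbath s ⟨hs.1, hlt⟩
    · simp [heq1]
  linarith

end Stmt15Aux2


open MeasureTheory Set Filter Topology Stmt15Aux Stmt15Aux2

theorem stmt_15 (h g : ℝ → ℝ) (hmeas : Measurable h)
    (hg : MonotoneOn g (Set.Icc (0 : ℝ) 1))
    (hL2h : MemLp h 2 (volume.restrict (Set.Icc (0 : ℝ) 1)))
    (hL2g : MemLp g 2 (volume.restrict (Set.Icc (0 : ℝ) 1)))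
    (hstar : ℝ → ℝ)
    (hdef : ∀ y, hstar y =
      sInf {z : ℝ | ENNReal.ofReal y ≤ volume {u ∈ Set.Icc (0 : ℝ) 1 | h u ≤ z}}) :
    ∫ y in Set.Icc (0 : ℝ) 1, (hstar y - g y) ^ 2
      ≤ ∫ y in Set.Icc (0 : ℝ) 1, (h y - g y) ^ 2 := by
  have L2mul : ∀ f k : ℝ → ℝ, MemLp f 2 (volume.restrict (Set.Icc (0 : ℝ) 1)) →
      MemLp k 2 (volume.restrict (Set.Icc (0 : ℝ) 1)) →
      Integrable (fun x => k x * f x) (volume.restrict (Set.Icc (0 : ℝ) 1)) := by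
    intro f k hf hk
    have hmem : MemLp (k • f) 1 (volume.restrict (Set.Icc (0 : ℝ) 1)) :=
      MemLp.smul hf hk
    have := hmem.integrable le_rfl
    simpa [Pi.smul_apply, smul_eq_mul, Pi.mul_def] using this
  haveI : IsProbabilityMeasure (volume.restrict (Set.Icc (0 : ℝ) 1)) := by
    constructor
    rw [Measure.restrict_apply_univ]
    simp [Real.volume_Icc]
  have hL2hstar := memL2_hstar hmeas hdef hL2h
  have hInt_h : Integrable h (volume.restrict (Set.Icc (0 : ℝ) 1)) :=
    hL2h.integrable one_le_two
  have hInt_hstar : Integrable hstar (volume.restrict (Set.Icc (0 : ℝ) 1)) :=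
    hL2hstar.integrable one_le_two
  have hg_h := L2mul h g hL2h hL2g
  have hg_hstar := L2mul hstar g hL2hstar hL2g
  have hgg := L2mul g g hL2g hL2g
  have hhh := L2mul h h hL2h hL2h
  have hss := L2mul hstar hstar hL2hstar hL2hstar
  have heq : ∫ y in Icc (0:ℝ) 1, h y = ∫ y in Icc (0:ℝ) 1, hstar y :=
    (transfer hmeas hdef measurable_id).symm
  have hsq : ∫ y in Icc (0:ℝ) 1, hstar y * hstar y = ∫ y in Icc (0:ℝ) 1, h y * h y :=
    transfer hmeas hdef (measurable_id.mul measurable_id)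
  have hbath : ∀ s ∈ Ioo (0:ℝ) 1, ∫ y in Ioo s 1, h y ≤ ∫ y in Ioo s 1, hstar y :=
    fun s hs => bathtub hmeas hdef hs hInt_h hInt_hstar
  have HL : ∫ y in Icc (0:ℝ) 1, g y * h y ≤ ∫ y in Icc (0:ℝ) 1, g y * hstar y :=
    HL_core hg hmeas.aemeasurable (hstar_aemeas' hmeas hdef) hInt_h hInt_hstar
      hg_h hg_hstar heq hbath
  have expand : ∀ χ : ℝ → ℝ,
      Integrable (fun y => χ y * χ y) (volume.restrict (Set.Icc (0 : ℝ) 1)) →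
      Integrable (fun y => g y * χ y) (volume.restrict (Set.Icc (0 : ℝ) 1)) →
      ∫ y in Icc (0:ℝ) 1, (χ y - g y) ^ 2
        = (∫ y in Icc (0:ℝ) 1, χ y * χ y) - 2 * (∫ y in Icc (0:ℝ) 1, g y * χ y)
          + ∫ y in Icc (0:ℝ) 1, g y * g y := by
    intro χ hχχ hgχ
    have hcongr : ∫ y in Icc (0:ℝ) 1, (χ y - g y) ^ 2
        = ∫ y in Icc (0:ℝ) 1, (χ y * χ y - 2 * (g y * χ y) + g y * g y) :=
      integral_congr_ae (Eventually.of_forall fun y => by ring)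
    have h1 : ∫ y in Icc (0:ℝ) 1, (χ y * χ y - 2 * (g y * χ y) + g y * g y)
        = (∫ y in Icc (0:ℝ) 1, (χ y * χ y - 2 * (g y * χ y))) + ∫ y in Icc (0:ℝ) 1, g y * g y :=
      integral_add (hχχ.sub (hgχ.const_mul 2)) hgg
    have h2 : ∫ y in Icc (0:ℝ) 1, (χ y * χ y - 2 * (g y * χ y))
        = (∫ y in Icc (0:ℝ) 1, χ y * χ y) - ∫ y in Icc (0:ℝ) 1, 2 * (g y * χ y) :=
      integral_sub hχχ (hgχ.const_mul 2)
    have h3 : ∫ y in Icc (0:ℝ) 1, 2 * (g y * χ y)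
        = 2 * ∫ y in Icc (0:ℝ) 1, g y * χ y := integral_const_mul 2 _
    rw [hcongr, h1, h2, h3]
  rw [expand hstar hss hg_hstar, expand h hhh hg_h, hsq]
  linarith
end
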